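/- For every k ≥ 1, c ≥ 1, and n ≥ 1, there is a number E = E(k,c,n) such that for every c-coloring χ of the perfect k-ary tree of height E there is an embedding φ of the perfect k-ary tree of height n into the perfect k-ary tree of height E whose image is monochromatic under χ (all nodes in the image of φ receive the same color). -/

import Mathlib

namespace TreeEmbAux

variable {k : ℕ}

/-- The embedding conditions. -/
def IsEmb (n : ℕ) (φ : List (Fin k) → List (Fin k)) (x : ℕ → ℕ) : Prop :=
  StrictMonoOn x (Set.Iic n) ∧
  (∀ t : List (Fin k), t.length ≤ n → (φ t).length = x t.length) ∧
  (∀ s t : List (Fin k), s.length ≤ n → t.length ≤ n → ∀ i : Fin k,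
    (t ++ [i]) <+: s → (φ t ++ [i]) <+: φ s)

/-- Conclusion: a `γ`-monochromatic embedded copy of the tree of height `n` within height `E`. -/
def Concl (n E : ℕ) {c : ℕ} (χ : List (Fin k) → Fin c) (γ : Fin c) : Prop :=
  ∃ φ x, IsEmb n φ x ∧ (∀ i ≤ n, x i ≤ E) ∧
    ∀ t : List (Fin k), t.length ≤ n → χ (φ t) = γ

lemma IsEmb.comp {n m : ℕ} {φ x ψ y} (h1 : IsEmb (k := k) n φ x) (h2 : IsEmb (k := k) m ψ y)
    (hb : ∀ i ≤ n, x i ≤ m) : IsEmb n (fun t => ψ (φ t)) (fun i => y (x i)) := by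
  obtain ⟨hx, hlen, hpre⟩ := h1
  obtain ⟨hy, hlen', hpre'⟩ := h2
  refine ⟨?_, ?_, ?_⟩
  · intro a ha b hb' hab
    exact hy (hb a ha) (hb b hb') (hx ha hb' hab)
  · intro t ht
    rw [hlen' _ (by rw [hlen t ht]; exact hb _ ht), hlen t ht]
  · intro s t hs ht i hpref
    refine hpre' _ _ ?_ ?_ i (hpre s t hs ht i hpref)
    · rw [hlen s hs]; exact hb _ hs
    · rw [hlen t ht]; exact hb _ ht

def pad (i₀ : Fin k) (s : List (Fin k)) (m : ℕ) : List (Fin k) :=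
  s ++ List.replicate (m - s.length) i₀

lemma pad_prefix (i₀ : Fin k) (s : List (Fin k)) (m : ℕ) : s <+: pad i₀ s m := ⟨_, rfl⟩

lemma pad_length (i₀ : Fin k) {s : List (Fin k)} {m : ℕ} (h : s.length ≤ m) :
    (pad i₀ s m).length = m := by
  simp [pad]; omega

def buildAux (i₀ : Fin k) (x : ℕ → ℕ) (v : List (Fin k)) : List (Fin k) → List (Fin k)
  | [] => pad i₀ v (x 0)
  | i :: r => pad i₀ (buildAux i₀ x v r ++ [i]) (x (r.length + 1))

def build (i₀ : Fin k) (x : ℕ → ℕ) (v t : List (Fin k)) : List (Fin k) :=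
  buildAux i₀ x v t.reverse

lemma build_nil (i₀ : Fin k) (x : ℕ → ℕ) (v : List (Fin k)) :
    build i₀ x v [] = pad i₀ v (x 0) := rfl

lemma build_concat (i₀ : Fin k) (x : ℕ → ℕ) (v t : List (Fin k)) (i : Fin k) :
    build i₀ x v (t ++ [i]) = pad i₀ (build i₀ x v t ++ [i]) (x (t.length + 1)) := by
  simp [build, buildAux]

lemma prefix_of_prefix_concat {α : Type*} {t s : List α} {a : α} (h : t <+: s ++ [a]) :
    t = s ++ [a] ∨ t <+: s := List.prefix_concat_iff.mp h

lemma build_length (i₀ : Fin k) (x : ℕ → ℕ) (v : List (Fin k)) (hv : v.length ≤ x 0) :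
    ∀ t : List (Fin k), (∀ m < t.length, x m < x (m + 1)) →
      (build i₀ x v t).length = x t.length := by
  intro t
  induction t using List.reverseRecOn with
  | nil => intro _; simpa [build_nil] using pad_length i₀ hv
  | append_singleton t i ih =>
    intro h
    have hlt : x t.length < x (t.length + 1) := h t.length (by simp)
    have hih : (build i₀ x v t).length = x t.length :=
      ih (fun m hm => h m (by simp; omega))
    rw [build_concat, pad_length]
    · simp
    · simp [hih]; omega

lemma prefix_build (i₀ : Fin k) (x : ℕ → ℕ) (v : List (Fin k)) :
    ∀ t, v <+: build i₀ x v t := by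
  intro t
  induction t using List.reverseRecOn with
  | nil => exact pad_prefix _ _ _
  | append_singleton t i ih =>
    rw [build_concat]
    exact ih.trans ((List.prefix_concat_iff.mpr (Or.inr (List.prefix_refl _))).trans
      (pad_prefix _ _ _))

lemma build_prefix_mono (i₀ : Fin k) (x : ℕ → ℕ) (v : List (Fin k)) :
    ∀ {s t : List (Fin k)}, t <+: s → build i₀ x v t <+: build i₀ x v s := by
  intro s
  induction s using List.reverseRecOn with
  | nil => intro t ht; rw [List.prefix_nil.mp ht]
  | append_singleton s a ih =>
    intro t ht
    rcases prefix_of_prefix_concat ht with rfl | ht'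
    · exact List.prefix_refl _
    · refine (ih ht').trans ?_
      rw [build_concat]
      exact (List.prefix_concat_iff.mpr (Or.inr (List.prefix_refl _))).trans (pad_prefix _ _ _)


/-- Scanning a window of `W+1` levels: either some level has a non-`γ` node above every
front node, or some front node has `nn+1` levels that are entirely `γ` above it. -/
lemma scan {c : ℕ} (χ : List (Fin k) → Fin c) (γ : Fin c) {ι : Type} [Fintype ι] [DecidableEq ι]
    (vf : ι → List (Fin k)) (a W nn : ℕ) (hW : Fintype.card ι * (nn + 1) < W + 1) :
    (∃ L, a ≤ L ∧ L ≤ a + W ∧ ∀ v : ι, ∃ w, vf v <+: w ∧ w.length = L ∧ χ w ≠ γ) ∨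
    (∃ v : ι, ∃ T : Finset ℕ, T.card = nn + 1 ∧ ∀ L ∈ T, a ≤ L ∧ L ≤ a + W ∧
       ∀ w, vf v <+: w → w.length = L → χ w = γ) := by
  by_contra hcon
  push_neg at hcon
  obtain ⟨h1, h2⟩ := hcon
  have hne : Nonempty ι := by
    have := h1 a le_rfl (Nat.le_add_right _ _)
    exact ⟨this.choose⟩
  have hch : ∀ L : ℕ, ∃ v : ι,
      (a ≤ L ∧ L ≤ a + W) → ∀ w, vf v <+: w → w.length = L → χ w = γ := by
    intro L
    by_cases hL : a ≤ L ∧ L ≤ a + W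
    · have h := h1 L hL.1 hL.2
      obtain ⟨v, hv⟩ := h
      refine ⟨v, fun _ w hpre hlen => ?_⟩
      have := hv w
      tauto
    · exact ⟨Classical.arbitrary ι, fun h => absurd h hL⟩
  choose f hf using hch
  have hmaps : ∀ L ∈ Finset.Icc a (a + W), f L ∈ (Finset.univ : Finset ι) :=
    fun _ _ => Finset.mem_univ _
  have hcard : (Finset.univ : Finset ι).card * (nn + 1) < (Finset.Icc a (a + W)).card := by
    rw [Nat.card_Icc]
    have : a + W + 1 - a = W + 1 := by omega
    rw [this]
    exact hW
  obtain ⟨v, -, hv⟩ := Finset.exists_lt_card_fiber_of_mul_lt_card_of_maps_to hmaps hcard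
  obtain ⟨T, hTsub, hTcard⟩ :=
    Finset.exists_subset_card_eq (n := nn + 1) (le_of_lt hv)
  have hprop : ∀ L ∈ T, a ≤ L ∧ L ≤ a + W ∧ ∀ w, vf v <+: w → w.length = L → χ w = γ := by
    intro L hL
    have hL' := hTsub hL
    rw [Finset.mem_filter] at hL'
    obtain ⟨hIcc, hfL⟩ := hL'
    rw [Finset.mem_Icc] at hIcc
    exact ⟨hIcc.1, hIcc.2, by rw [← hfL]; exact hf L hIcc⟩
  obtain ⟨L, hLT, hLbad⟩ := h2 v T hTcard
  obtain ⟨hL1, hL2, hall⟩ := hprop L hLT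
  obtain ⟨w, hw1, hw2, hw3⟩ := hLbad hL1 hL2
  exact hw3 (hall w hw1 hw2)

/-- From `n+1` levels above `v` that are entirely colored `γ`, build a `γ`-monochromatic
embedded copy of the tree of height `n`. -/
lemma escape (i₀ : Fin k) {c : ℕ} (χ : List (Fin k) → Fin c) (γ : Fin c) (n E : ℕ)
    (v : List (Fin k)) (T : Finset ℕ) (hT : T.card = n + 1)
    (hmem : ∀ L ∈ T, v.length ≤ L ∧ L ≤ E ∧ ∀ w, v <+: w → w.length = L → χ w = γ) :
    Concl n E χ γ := by
  set e := T.orderEmbOfFin hT with he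
  set x : ℕ → ℕ := fun m => e ⟨min m n, by omega⟩ with hx
  have hxT : ∀ m, x m ∈ T := fun m => T.orderEmbOfFin_mem hT _
  have hxmono : ∀ m, m < n → x m < x (m + 1) := by
    intro m hm
    apply e.strictMono
    simp [Fin.mk_lt_mk]
    omega
  have hv0 : v.length ≤ x 0 := (hmem _ (hxT 0)).1
  have hlen : ∀ t : List (Fin k), t.length ≤ n → (build i₀ x v t).length = x t.length := by
    intro t ht
    exact build_length i₀ x v hv0 t (fun m hm => hxmono m (by omega))
  refine ⟨build i₀ x v, x, ⟨?_, hlen, ?_⟩, ?_, ?_⟩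
  · intro a ha b hb hab
    simp only [Set.mem_Iic] at ha hb
    apply e.strictMono
    simp [Fin.mk_lt_mk]
    omega
  · intro s t _ _ i hpref
    have h1 : build i₀ x v t ++ [i] <+: build i₀ x v (t ++ [i]) := by
      rw [build_concat]
      exact pad_prefix _ _ _
    exact h1.trans (build_prefix_mono i₀ x v hpref)
  · intro i _
    exact (hmem _ (hxT i)).2.1
  · intro t ht
    exact (hmem _ (hxT t.length)).2.2 _ (prefix_build i₀ x v t) (hlen t ht)


lemma ofFn_getD (i₀ : Fin k) {l : List (Fin k)} {j : ℕ} (h : l.length = j) :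
    List.ofFn (fun m : Fin j => l.getD m i₀) = l := by
  subst h
  apply List.ext_getElem (by simp)
  intro i h1 h2
  simp [List.getD_eq_getElem]

/-- The greedy construction: either we find a `γ`-monochromatic copy of height `n`
(escape), or we build a `γ`-avoiding embedded copy of height `j`, for each `j ≤ J`. -/
lemma greedy (i₀ : Fin k) {c : ℕ} (χ : List (Fin k) → Fin c) (γ : Fin c) (n J : ℕ) :
    ∀ j, j ≤ J →
      Concl n ((J + 2) * (k ^ (J + 1) * (n + 1) + 1)) χ γ ∨
      ∃ ψ y, IsEmb j ψ y ∧
        (∀ m ≤ j, y m ≤ (m + 1) * (k ^ (J + 1) * (n + 1) + 1)) ∧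
        (∀ t : List (Fin k), t.length ≤ j → χ (ψ t) ≠ γ) := by
  classical
  have hk : 0 < k := by have := i₀.isLt; omega
  set W : ℕ := k ^ (J + 1) * (n + 1) with hWdef
  have hpow : 1 ≤ k ^ (J + 1) := Nat.one_le_pow _ _ hk
  have hWn : n + 1 ≤ W := by
    calc n + 1 = 1 * (n + 1) := by ring
    _ ≤ k ^ (J + 1) * (n + 1) := Nat.mul_le_mul_right _ hpow
  intro j
  induction j with
  | zero =>
    intro _
    rcases scan χ γ (fun _ : PUnit => ([] : List (Fin k))) 0 W n (by simp; omega) with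
      ⟨L, hL1, hL2, hGood⟩ | ⟨v, T, hT, hbad⟩
    · obtain ⟨w₀, -, hw₀len, hw₀col⟩ := hGood PUnit.unit
      refine Or.inr ⟨fun _ => w₀, fun m => L + m, ⟨?_, ?_, ?_⟩, ?_, ?_⟩
      · intro a _ b _ hab
        exact Nat.add_lt_add_left hab L
      · intro t ht
        have h0 : t.length = 0 := by omega
        rw [h0, hw₀len]
        simp
      · intro s t hs ht i hpref
        have := hpref.length_le
        simp at this
        omega
      · intro m hm
        have hm0 : m = 0 := by omega
        subst hm0
        have h1 : (0 + 1) * (W + 1) = W + 1 := by ring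
        simp only [h1]
        simp
        omega
      · intro t _
        exact hw₀col
    · refine Or.inl (escape i₀ χ γ n _ [] T hT ?_)
      intro L hL
      obtain ⟨h1, h2, h3⟩ := hbad L hL
      refine ⟨by simp, ?_, h3⟩
      have hmul : 1 * (W + 1) ≤ (J + 2) * (W + 1) := Nat.mul_le_mul_right _ (by omega)
      simp at h2
      omega
  | succ j ihj =>
    intro hj
    rcases ihj (by omega) with hesc | ⟨ψ, y, ⟨hymono, hψlen, hψpre⟩, hybound, hψcol⟩
    · exact Or.inl hesc
    have hyj : y j ≤ (j + 1) * (W + 1) := hybound j le_rfl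
    have hcardι : Fintype.card (Fin k × (Fin j → Fin k)) * (n + 1) < W + 1 := by
      have h1 : Fintype.card (Fin k × (Fin j → Fin k)) = k ^ (j + 1) := by
        simp [pow_succ, mul_comm]
      rw [h1]
      have h2 : k ^ (j + 1) ≤ k ^ (J + 1) := Nat.pow_le_pow_right hk (by omega)
      have h3 : k ^ (j + 1) * (n + 1) ≤ W := Nat.mul_le_mul_right _ h2
      omega
    rcases scan χ γ (fun p : Fin k × (Fin j → Fin k) => ψ (List.ofFn p.2) ++ [p.1])
        (y j + 1) W n hcardι with ⟨L, hL1, hL2, hGood⟩ | ⟨⟨i, f⟩, T, hT, hbad⟩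
    · -- good case: extend the γ-avoiding copy by one level
      choose wfun hw using hGood
      set ψ' : List (Fin k) → List (Fin k) := fun s =>
        if s.length ≤ j then ψ s
        else wfun (s.getLastD i₀, fun m : Fin j => s.dropLast.getD m i₀) with hψ'def
      set y' : ℕ → ℕ := fun m => if m ≤ j then y m else L + (m - (j + 1)) with hy'def
      have hstep : ∀ t : List (Fin k), t.length = j → ∀ i : Fin k,
          (ψ t ++ [i]) <+: ψ' (t ++ [i]) ∧ (ψ' (t ++ [i])).length = L ∧
          χ (ψ' (t ++ [i])) ≠ γ := by
        intro t ht i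
        have hlen : ¬ (t ++ [i]).length ≤ j := by simp [ht]
        have hd : (t ++ [i]).dropLast = t := List.dropLast_concat
        have hl : (t ++ [i]).getLastD i₀ = i := List.getLastD_concat
        have heq : ψ' (t ++ [i]) = wfun (i, fun m : Fin j => t.getD m i₀) := by
          rw [hψ'def]
          simp only [if_neg hlen, hd, hl]
        rw [heq]
        have := hw (i, fun m : Fin j => t.getD m i₀)
        simp only [ofFn_getD i₀ ht] at this
        exact this
      have hψ'eq : ∀ t : List (Fin k), t.length ≤ j → ψ' t = ψ t := by
        intro t ht; rw [hψ'def]; simp [ht]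
      have hy'eq : ∀ m, m ≤ j → y' m = y m := by
        intro m hm; rw [hy'def]; simp [hm]
      have hy'top : y' (j + 1) = L := by
        rw [hy'def]; simp
      have hdecomp : ∀ s : List (Fin k), s.length = j + 1 →
          ∃ t i, s = t ++ [i] ∧ t.length = j := by
        intro s hs
        rcases List.eq_nil_or_concat s with rfl | ⟨t, i, rfl⟩
        · simp at hs
        · rw [List.concat_eq_append] at hs ⊢
          simp at hs
          exact ⟨t, i, rfl, hs⟩
      refine Or.inr ⟨ψ', y', ⟨?_, ?_, ?_⟩, ?_, ?_⟩
      · -- strict mono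
        intro a ha b hb hab
        simp only [Set.mem_Iic] at ha hb
        by_cases hbj : b ≤ j
        · rw [hy'eq a (by omega), hy'eq b hbj]
          exact hymono (by simp; omega) (by simpa) hab
        · have hb1 : b = j + 1 := by omega
          rw [hy'eq a (by omega), hb1, hy'top]
          have hya : y a ≤ y j := by
            rcases eq_or_lt_of_le (show a ≤ j by omega) with heq | hlt
            · rw [heq]
            · exact le_of_lt (hymono (Set.mem_Iic.mpr (by omega)) (Set.mem_Iic.mpr le_rfl) hlt)
          omega
      · -- lengths
        intro t ht
        by_cases htj : t.length ≤ j
        · rw [hψ'eq t htj, hy'eq _ htj]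
          exact hψlen t htj
        · have ht1 : t.length = j + 1 := by omega
          obtain ⟨t', i, rfl, ht'⟩ := hdecomp t ht1
          rw [ht1, hy'top]
          exact (hstep t' ht' i).2.1
      · -- prefix condition
        intro s t hs ht i hpref
        have hst : t.length + 1 ≤ s.length := by
          have := hpref.length_le
          simpa using this
        by_cases hsj : s.length ≤ j
        · rw [hψ'eq s hsj, hψ'eq t (by omega)]
          exact hψpre s t hsj (by omega) i hpref
        · have hs1 : s.length = j + 1 := by omega
          obtain ⟨t', a, rfl, ht'⟩ := hdecomp s hs1
          rw [hψ'eq t (by omega)]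
          by_cases htj : t.length = j
          · have heq : t ++ [i] = t' ++ [a] :=
              hpref.eq_of_length (by simp [htj, ht'])
            have h1 : t = t' := by
              have := congrArg List.dropLast heq
              simpa [List.dropLast_concat] using this
            have h2 : i = a := by
              have := congrArg (fun l => l.getLastD i₀) heq
              simpa [List.getLastD_concat] using this
            subst h1; subst h2
            exact (hstep t htj i).1
          · have hpf' : t ++ [i] <+: t' := by
              rcases prefix_of_prefix_concat hpref with heq | h
              · exfalso
                have := congrArg List.length heq
                simp [ht'] at this
                omega
              · exact h
            have h1 : ψ t ++ [i] <+: ψ t' := hψpre t' t (le_of_eq ht') (by omega) i hpf'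
            have h2 : ψ t' <+: ψ t' ++ [a] := ⟨[a], rfl⟩
            exact h1.trans (h2.trans (hstep t' ht' a).1)
      · -- bounds
        intro m hm
        by_cases hmj : m ≤ j
        · rw [hy'eq m hmj]
          exact hybound m hmj
        · have hm1 : m = j + 1 := by omega
          rw [hm1, hy'top]
          have h2 : (j + 1) * (W + 1) + (W + 1) = (j + 1 + 1) * (W + 1) := by ring
          omega
      · -- colors
        intro t ht
        by_cases htj : t.length ≤ j
        · rw [hψ'eq t htj]
          exact hψcol t htj
        · have ht1 : t.length = j + 1 := by omega
          obtain ⟨t', i, rfl, ht'⟩ := hdecomp t ht1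
          exact (hstep t' ht' i).2.2
    · -- bad case: escape with a monochromatic copy above ψ (ofFn f) ++ [i]
      set t₀ : List (Fin k) := List.ofFn f with ht₀def
      have ht₀ : t₀.length = j := by simp [ht₀def]
      have hvlen : (ψ t₀ ++ [i]).length = y j + 1 := by
        simp [hψlen t₀ (le_of_eq ht₀), ht₀]
      refine Or.inl (escape i₀ χ γ n _ (ψ t₀ ++ [i]) T hT ?_)
      intro L hL
      obtain ⟨h1, h2, h3⟩ := hbad L hL
      refine ⟨by omega, ?_, h3⟩
      have hmul : (j + 2) * (W + 1) ≤ (J + 2) * (W + 1) := Nat.mul_le_mul_right _ (by omega)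
      have hr : (j + 1) * (W + 1) + (W + 1) = (j + 2) * (W + 1) := by ring
      omega


/-- Main lemma: induction on the number of colors. -/
lemma main (i₀ : Fin k) : ∀ (c : ℕ) (n : ℕ), ∃ E : ℕ, ∀ χ : List (Fin k) → Fin (c + 1),
    ∃ φ x, IsEmb n φ x ∧ (∀ i ≤ n, x i ≤ E) ∧
      ∃ col, ∀ t : List (Fin k), t.length ≤ n → χ (φ t) = col := by
  intro c
  induction c with
  | zero =>
    intro n
    refine ⟨n, fun χ => ⟨id, id, ⟨?_, ?_, ?_⟩, ?_, 0, fun t _ => by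
      have h := (χ (id t)).isLt
      exact Fin.ext (by omega)⟩⟩
    · exact fun a _ b _ h => h
    · intro t _; rfl
    · intro s t _ _ i h; exact h
    · intro i h; exact h
  | succ c ih =>
    intro n
    obtain ⟨J, hJ⟩ := ih n
    refine ⟨(J + 2) * (k ^ (J + 1) * (n + 1) + 1), ?_⟩
    intro χ
    rcases greedy i₀ χ (Fin.last (c + 1)) n J J le_rfl with
      ⟨φ, x, hemb, hbd, hcol⟩ | ⟨ψ, y, hembψ, hybd, hψcol⟩
    · exact ⟨φ, x, hemb, hbd, Fin.last (c + 1), hcol⟩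
    · obtain ⟨φ', x', hemb', hbd', col', hcol'⟩ :=
        hJ (fun u => if h : χ (ψ u) = Fin.last (c + 1) then 0 else (χ (ψ u)).castPred h)
      obtain ⟨hm', hl', hp'⟩ := hemb'
      refine ⟨fun t => ψ (φ' t), fun i => y (x' i),
        IsEmb.comp ⟨hm', hl', hp'⟩ hembψ hbd', ?_, col'.castSucc, ?_⟩
      · intro i hi
        have h1 : x' i ≤ J := hbd' i hi
        have h2 := hybd (x' i) h1
        have h3 : (x' i + 1) * (k ^ (J + 1) * (n + 1) + 1) ≤
            (J + 2) * (k ^ (J + 1) * (n + 1) + 1) := Nat.mul_le_mul_right _ (by omega)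
        show y (x' i) ≤ (J + 2) * (k ^ (J + 1) * (n + 1) + 1)
        omega
      · intro t ht
        have hlt : (φ' t).length ≤ J := by
          rw [hl' t ht]
          exact hbd' _ ht
        have hne : χ (ψ (φ' t)) ≠ Fin.last (c + 1) := hψcol _ hlt
        have hthis := hcol' t ht
        simp only [dif_neg hne] at hthis
        rw [← hthis, Fin.castSucc_castPred]

end TreeEmbAux



/-- Nodes of the perfect `k`-ary tree are strings over `{1, …, k}` (here `List (Fin k)`),
a node of level `j` being a string of length `j`; the tree of height `n` consists of the
strings of length at most `n`. An embedding of the tree of height `n` into the tree of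
height `E` is a map `φ` together with a strictly increasing level function `x` such that
nodes of level `i` map to level `x i`, and if `t·i` is a prefix of `s` then `φ(t)·i` is a
prefix of `φ(s)`.

**Lemma (tree embedding).** For every `k, c, n ≥ 1` there is an `E = E(k,c,n)` so that every
`c`-coloring of the `k`-ary tree of height `E` admits a monochromatic embedded copy of the
`k`-ary tree of height `n`. -/
theorem tree_embedding_lemma (k c n : ℕ) (hk : 1 ≤ k) (hc : 1 ≤ c) (hn : 1 ≤ n) :
    ∃ E : ℕ, ∀ χ : List (Fin k) → Fin c,
      ∃ (φ : List (Fin k) → List (Fin k)) (x : ℕ → ℕ),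
        StrictMonoOn x (Set.Iic n) ∧
        (∀ i ≤ n, x i ≤ E) ∧
        (∀ t : List (Fin k), t.length ≤ n → (φ t).length = x t.length) ∧
        (∀ s t : List (Fin k), s.length ≤ n → t.length ≤ n → ∀ i : Fin k,
          (t ++ [i]) <+: s → (φ t ++ [i]) <+: φ s) ∧
        ∃ col : Fin c, ∀ t : List (Fin k), t.length ≤ n → χ (φ t) = col := by
  obtain ⟨c', rfl⟩ : ∃ c', c = c' + 1 := ⟨c - 1, by omega⟩
  obtain ⟨E, hE⟩ := TreeEmbAux.main (k := k) ⟨0, hk⟩ c' n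
  refine ⟨E, fun χ => ?_⟩
  obtain ⟨φ, x, ⟨h1, h2, h3⟩, h4, col, h5⟩ := hE χ
  exact ⟨φ, x, h1, h4, h2, h3, col, h5⟩
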